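/- arXiv:1311.7076 — 4 statements merged into one kernel-verified Lean document; each statement's English description precedes it below -/
import Mathlib

section
/- If m ∈ {1,...,n-1} and A is a Borel set contained in an m-dimensional affine subspace of ℝⁿ, then the square of the m-dimensional Hausdorff measure of A equals 1/(n-m) times the sum over i = 1,...,n of the squares of the m-dimensional Hausdorff measures of the orthogonal projections of A onto the coordinate hyperplanes eᵢ^⊥. -/
open MeasureTheory Finset Pointwise
open scoped ENNReal NNReal

noncomputable def ballVolume (k : ℕ) : ℝ :=
  (volume (Metric.ball (0 : EuclideanSpace ℝ (Fin k)) 1)).toReal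

/-- The Steiner polynomial of a compact convex set `K ⊆ ℝⁿ`, recovered by Lagrange
interpolation of `t ↦ vol(K + t Bⁿ)` at `t = 0, 1, …, n`. -/
noncomputable def steinerPoly (n : ℕ) (K : Set (EuclideanSpace ℝ (Fin n))) : Polynomial ℝ :=
  Lagrange.interpolate (Finset.range (n + 1)) (fun j => (j : ℝ))
    (fun j => (volume (K + Metric.closedBall (0 : EuclideanSpace ℝ (Fin n)) (j : ℝ))).toReal)

/-- The `m`-th intrinsic volume `V_m(K)`, via the Steiner formula
`vol(K + t Bⁿ) = ∑_m κ_{n-m} V_m(K) t^{n-m}`. -/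
noncomputable def intrinsicVolume (n m : ℕ) (K : Set (EuclideanSpace ℝ (Fin n))) : ℝ :=
  (steinerPoly n K).coeff (n - m) / ballVolume (n - m)

/-- Orthogonal projection of a subset of `ℝⁿ` onto the coordinate hyperplane `eᵢ^⊥`. -/
noncomputable def coordProj {n : ℕ} (i : Fin n) (A : Set (EuclideanSpace ℝ (Fin n))) :
    Set (EuclideanSpace ℝ (Fin n)) :=
  (fun x => x - x i • EuclideanSpace.single i 1) '' A

open Module
open scoped RealInnerProductSpace

lemma aux_norm_sq {k : ℕ} (y : EuclideanSpace ℝ (Fin k)) : ‖y‖ ^ 2 = ∑ i, (y i) ^ 2 := by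
  rw [EuclideanSpace.norm_eq, Real.sq_sqrt (by positivity)]
  simp [sq_abs]

lemma aux_haar (m : ℕ) :
    (μH[(m : ℝ)] : Measure (EuclideanSpace ℝ (Fin m))).IsAddHaarMeasure := by
  have := isAddHaarMeasure_hausdorffMeasure (E := EuclideanSpace ℝ (Fin m))
  simpa [finrank_euclideanSpace_fin] using this

lemma aux_image_linear {m : ℕ} (T : EuclideanSpace ℝ (Fin m) →ₗ[ℝ] EuclideanSpace ℝ (Fin m))
    (s : Set (EuclideanSpace ℝ (Fin m))) :
    μH[(m : ℝ)] (⇑T '' s) = ENNReal.ofReal |T.det| * μH[(m : ℝ)] s := by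
  haveI := aux_haar m
  exact Measure.addHaar_image_linearMap _ T s

lemma aux_exists_isometry {N m : ℕ} (W : Submodule ℝ (EuclideanSpace ℝ (Fin N)))
    (h : finrank ℝ W = m) :
    ∃ J : EuclideanSpace ℝ (Fin m) →ₗᵢ[ℝ] EuclideanSpace ℝ (Fin N), Set.range J = W := by
  subst h
  refine ⟨W.subtypeₗᵢ.comp (stdOrthonormalBasis ℝ W).repr.symm.toLinearIsometry, ?_⟩
  rw [LinearIsometry.coe_comp, Set.range_comp]
  have : Set.range (stdOrthonormalBasis ℝ W).repr.symm.toLinearIsometry = Set.univ :=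
    (stdOrthonormalBasis ℝ W).repr.symm.surjective.range_eq
  rw [this, Set.image_univ, Submodule.coe_subtypeₗᵢ]
  exact Subtype.range_coe

lemma aux_submodule_zero {N m : ℕ} (W : Submodule ℝ (EuclideanSpace ℝ (Fin N)))
    (hW : finrank ℝ W < m) : μH[(m : ℝ)] (W : Set (EuclideanSpace ℝ (Fin N))) = 0 := by
  obtain ⟨J, hJ⟩ := aux_exists_isometry W rfl
  rw [← hJ, ← Set.image_univ, J.isometry.hausdorffMeasure_image (Or.inl (by positivity))]
  have : (μH[(m : ℝ)] : Measure (EuclideanSpace ℝ (Fin (finrank ℝ W)))) = 0 :=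
    Real.hausdorffMeasure_of_finrank_lt (by rw [finrank_euclideanSpace_fin]; exact_mod_cast hW)
  simp [this]

noncomputable def rankOneT {m : ℕ} (v : EuclideanSpace ℝ (Fin m)) (c : ℝ) :
    EuclideanSpace ℝ (Fin m) →ₗ[ℝ] EuclideanSpace ℝ (Fin m) where
  toFun x := x + (c * ⟪v, x⟫) • v
  map_add' x y := by
    simp only [inner_add_right, mul_add, add_smul]
    abel
  map_smul' r x := by
    simp only [RingHom.id_apply, real_inner_smul_right, smul_add, smul_smul]
    rw [mul_left_comm]

@[simp] lemma rankOneT_apply {m : ℕ} (v : EuclideanSpace ℝ (Fin m)) (c : ℝ) (x) :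
    rankOneT v c x = x + (c * ⟪v, x⟫) • v := rfl

lemma det_rankOneT {m : ℕ} (v : EuclideanSpace ℝ (Fin m)) (c : ℝ) :
    (rankOneT v c).det = 1 + c * ‖v‖ ^ 2 := by
  classical
  let b := (EuclideanSpace.basisFun (Fin m) ℝ).toBasis
  rw [← LinearMap.det_toMatrix b]
  have hM : LinearMap.toMatrix b b (rankOneT v c) =
      1 + Matrix.replicateCol Unit (fun j => c * v j) * Matrix.replicateRow Unit (fun j => v j) := by
    ext j k
    rw [LinearMap.toMatrix_apply]
    have hbk : b k = EuclideanSpace.single k 1 := by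
      simp [b, OrthonormalBasis.coe_toBasis, EuclideanSpace.basisFun_apply]
    have hrepr : ∀ y : EuclideanSpace ℝ (Fin m), b.repr y j = y j := fun y => by
      simp [b, OrthonormalBasis.coe_toBasis_repr_apply, EuclideanSpace.basisFun_repr]
    rw [hbk, hrepr]
    have hinner : ⟪v, EuclideanSpace.single k (1 : ℝ)⟫ = v k := by
      rw [EuclideanSpace.inner_single_right]; simp
    simp only [rankOneT_apply, hinner, PiLp.add_apply, PiLp.smul_apply,
      EuclideanSpace.single_apply, smul_eq_mul, Matrix.add_apply, Matrix.mul_apply,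
      Matrix.replicateCol_apply, Matrix.replicateRow_apply, Finset.univ_unique, Finset.sum_singleton,
      Matrix.one_apply]
    by_cases h : j = k <;> simp [h, eq_comm] <;> ring
  rw [hM, Matrix.det_one_add_replicateCol_mul_replicateRow]
  have : ‖v‖ ^ 2 = ∑ i, (v i) ^ 2 := by
    rw [EuclideanSpace.norm_eq, Real.sq_sqrt (by positivity)]; simp [sq_abs]
  simp only [dotProduct, this, Finset.mul_sum]
  congr 1
  exact Finset.sum_congr rfl fun i _ => by ring

lemma aux_t_le_one {n m : ℕ} (J : EuclideanSpace ℝ (Fin m) →ₗᵢ[ℝ] EuclideanSpace ℝ (Fin n))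
    (i : Fin n) (u : EuclideanSpace ℝ (Fin m)) (hu : ∀ x, ⟪u, x⟫ = J x i) : ‖u‖ ^ 2 ≤ 1 := by
  have h1 : ‖u‖ ^ 2 = J u i := by rw [← hu u, real_inner_self_eq_norm_sq]
  have h2 : |J u i| ≤ ‖u‖ := by
    have h : (J u) i = ⟪EuclideanSpace.single i (1 : ℝ), J u⟫ := by
      rw [EuclideanSpace.inner_single_left]; simp
    rw [h]
    calc |⟪EuclideanSpace.single i (1 : ℝ), J u⟫| ≤ ‖EuclideanSpace.single i (1:ℝ)‖ * ‖J u‖ :=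
          abs_real_inner_le_norm _ _
      _ = ‖u‖ := by rw [EuclideanSpace.norm_single, J.norm_map]; simp
  nlinarith [norm_nonneg u, le_abs_self (J u i)]

lemma aux_key {n m : ℕ} (J : EuclideanSpace ℝ (Fin m) →ₗᵢ[ℝ] EuclideanSpace ℝ (Fin n))
    (i : Fin n) (u : EuclideanSpace ℝ (Fin m)) (hu : ∀ x, ⟪u, x⟫ = J x i)
    (s : Set (EuclideanSpace ℝ (Fin m))) :
    μH[(m : ℝ)] ((fun x => J x - J x i • EuclideanSpace.single i (1 : ℝ)) '' s)
      = ENNReal.ofReal (Real.sqrt (1 - ‖u‖ ^ 2)) * μH[(m : ℝ)] s := by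
  classical
  have ht1 : ‖u‖ ^ 2 ≤ 1 := aux_t_le_one J i u hu
  set ML : EuclideanSpace ℝ (Fin m) →ₗ[ℝ] EuclideanSpace ℝ (Fin n) :=
    J.toLinearMap - LinearMap.smulRight
      ((EuclideanSpace.proj i : EuclideanSpace ℝ (Fin n) →L[ℝ] ℝ).toLinearMap.comp J.toLinearMap)
      (EuclideanSpace.single i (1 : ℝ)) with hML
  have hMLapply : ∀ x, ML x = J x - J x i • EuclideanSpace.single i (1 : ℝ) := fun x => rfl
  have hM : ∀ x, ‖ML x‖ ^ 2 = ‖x‖ ^ 2 - ⟪u, x⟫ ^ 2 := by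
    intro x
    rw [hMLapply, norm_sub_sq_real, real_inner_smul_right, norm_smul]
    have h1 : ⟪J x, EuclideanSpace.single i (1 : ℝ)⟫ = J x i := by
      rw [EuclideanSpace.inner_single_right]; simp
    rw [h1, EuclideanSpace.norm_single, J.norm_map, hu]
    simp only [Real.norm_eq_abs, norm_one, mul_one, mul_pow, sq_abs]
    ring
  rcases eq_or_lt_of_le ht1 with h1 | h1
  · -- degenerate case ‖u‖² = 1
    have hune : u ≠ 0 := by
      intro h; rw [h] at h1; simp at h1
    have hMu : ML u = 0 := by
      have h2 := hM u
      rw [real_inner_self_eq_norm_sq] at h2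
      have h3 : ‖ML u‖ ^ 2 = 0 := by rw [h2, h1]; norm_num
      have := pow_eq_zero_iff (n := 2) (by norm_num) |>.mp h3
      exact norm_eq_zero.mp this
    haveI : Nontrivial (LinearMap.ker ML) :=
      nontrivial_of_ne ⟨u, LinearMap.mem_ker.mpr hMu⟩ 0 (by simp [hune])
    have hker : 0 < finrank ℝ (LinearMap.ker ML) := finrank_pos
    have hrange : finrank ℝ (LinearMap.range ML) < m := by
      have h4 := LinearMap.finrank_range_add_finrank_ker ML
      rw [finrank_euclideanSpace_fin] at h4
      omega
    have h0 : μH[(m : ℝ)] ((fun x => J x - J x i • EuclideanSpace.single i (1 : ℝ)) '' s) = 0 := by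
      refine le_antisymm (le_trans (measure_mono ?_) (aux_submodule_zero _ hrange).le) zero_le
      rintro y ⟨x, _, rfl⟩
      exact ⟨x, (hMLapply x).symm⟩
    rw [h0, ← h1]
    simp
  · -- nondegenerate case ‖u‖² < 1
    set c : ℝ := Real.sqrt (1 - ‖u‖ ^ 2) - 1 with hc
    set v : EuclideanSpace ℝ (Fin m) := ‖u‖⁻¹ • u with hv
    set T := rankOneT v c with hT
    have hsq : (c + 1) ^ 2 = 1 - ‖u‖ ^ 2 := by
      rw [hc, sub_add_cancel, Real.sq_sqrt (by linarith)]
    have hdet : T.det = Real.sqrt (1 - ‖u‖ ^ 2) := by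
      rw [hT, det_rankOneT]
      rcases eq_or_ne u 0 with h | h
      · simp [hv, h, hc]
      · have hv1 : ‖v‖ = 1 := norm_smul_inv_norm h
        rw [hv1, hc]; ring
    have hdetpos : 0 < T.det := by
      rw [hdet]; exact Real.sqrt_pos.mpr (by linarith)
    have hTnorm : ∀ x, ‖T x‖ ^ 2 = ‖x‖ ^ 2 - ⟪u, x⟫ ^ 2 := by
      intro x
      rw [hT, rankOneT_apply, norm_add_sq_real, real_inner_smul_right, norm_smul]
      rcases eq_or_ne u 0 with h | h
      · simp [hv, h]
      · have hv1 : ‖v‖ = 1 := norm_smul_inv_norm h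
        have hvx : ⟪v, x⟫ = ‖u‖⁻¹ * ⟪u, x⟫ := by rw [hv, real_inner_smul_left]
        have hxv : ⟪x, v⟫ = ‖u‖⁻¹ * ⟪u, x⟫ := by rw [real_inner_comm]; exact hvx
        have hne : ‖u‖ ≠ 0 := by simpa using h
        have hcc : c ^ 2 + 2 * c = -(‖u‖ ^ 2) := by nlinarith [hsq]
        have hrr : ‖u‖⁻¹ * ‖u‖ = 1 := inv_mul_cancel₀ hne
        rw [hv1, hvx, hxv]
        simp only [Real.norm_eq_abs, mul_one, mul_pow, sq_abs]
        linear_combination (⟪u, x⟫ ^ 2 * ‖u‖⁻¹ ^ 2) * hcc -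
          ⟪u, x⟫ ^ 2 * (1 + ‖u‖⁻¹ * ‖u‖) * hrr
    have hdetne : T.det ≠ 0 := ne_of_gt hdetpos
    set Te := T.equivOfDetNeZero hdetne with hTe
    have hTecoe : ∀ x, Te x = T x := fun _ => rfl
    have hMT : ∀ x, ‖ML x‖ = ‖T x‖ := by
      intro x
      have h3 : ‖ML x‖ ^ 2 = ‖T x‖ ^ 2 := by rw [hM x, hTnorm x]
      have h4 := congrArg Real.sqrt h3
      rwa [Real.sqrt_sq (norm_nonneg _), Real.sqrt_sq (norm_nonneg _)] at h4
    set iso : EuclideanSpace ℝ (Fin m) →ₗᵢ[ℝ] EuclideanSpace ℝ (Fin n) :=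
      ⟨ML.comp (Te.symm : EuclideanSpace ℝ (Fin m) →ₗ[ℝ] EuclideanSpace ℝ (Fin m)), fun y => by
        simp only [LinearMap.comp_apply, LinearEquiv.coe_coe]
        rw [hMT]
        show ‖Te (Te.symm y)‖ = ‖y‖
        rw [Te.apply_symm_apply]⟩ with hiso
    have himg : (fun x => J x - J x i • EuclideanSpace.single i (1 : ℝ)) '' s
        = ⇑iso '' (⇑T '' s) := by
      rw [Set.image_image]
      apply Set.image_congr'
      intro x
      rw [← hMLapply]
      show ML x = ML (Te.symm (Te x))
      rw [Te.symm_apply_apply]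
    rw [himg]
    rw [iso.isometry.hausdorffMeasure_image (Or.inl (by positivity : (0:ℝ) ≤ (m:ℕ)))]
    rw [aux_image_linear]
    rw [hdet, abs_of_nonneg (Real.sqrt_nonneg _)]

/-- **Generalized Pythagorean theorem for coordinate hyperplanes.**
If `1 ≤ m ≤ n-1` and `A` is a Borel set contained in an `m`-dimensional affine subspace
of `ℝⁿ`, then `ℋ^m(A)² = (1/(n-m)) ∑_{i=1}^n ℋ^m(A|eᵢ^⊥)²`. -/
theorem stmt0 (n m : ℕ) (hm : 1 ≤ m) (hmn : m ≤ n - 1) (hn : 1 ≤ n)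
    (A : Set (EuclideanSpace ℝ (Fin n))) (hA : MeasurableSet A)
    (S : AffineSubspace ℝ (EuclideanSpace ℝ (Fin n)))
    (hS : Module.finrank ℝ S.direction = m) (hAS : (A : Set _) ⊆ S) :
    (μH[(m : ℝ)] A) ^ 2 =
      (1 / (n - m : ℕ) : ℝ≥0∞) * ∑ i : Fin n, (μH[(m : ℝ)] (coordProj i A)) ^ 2 := by
  classical
  have hmn' : m < n := by omega
  -- S is nonempty
  obtain ⟨p, hp⟩ : (S : Set (EuclideanSpace ℝ (Fin n))).Nonempty := by
    by_contra h
    rw [Set.not_nonempty_iff_eq_empty, AffineSubspace.coe_eq_bot_iff] at h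
    rw [h, AffineSubspace.direction_bot, finrank_bot] at hS
    omega
  obtain ⟨J, hJ⟩ := aux_exists_isometry S.direction hS
  set φ : EuclideanSpace ℝ (Fin m) → EuclideanSpace ℝ (Fin n) := fun x => J x + p with hφdef
  have hφ : Isometry φ := Isometry.of_dist_eq fun x y => by
    simp only [hφdef, dist_add_right]
    exact J.dist_map x y
  set B := φ ⁻¹' A with hB
  have hAB : φ '' B = A := by
    apply Set.image_preimage_eq_of_subset
    intro a ha
    have hmem : a - p ∈ S.direction := by
      simpa [vsub_eq_sub] using AffineSubspace.vsub_mem_direction (hAS ha) hp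
    have hmem' : a - p ∈ Set.range ⇑J := by rw [hJ]; exact hmem
    obtain ⟨x, hx⟩ := hmem'
    exact ⟨x, by simp [hφdef, hx]⟩
  have hm0 : (0 : ℝ) ≤ (m : ℕ) := by positivity
  have hmHA : μH[(m : ℝ)] A = μH[(m : ℝ)] B := by
    rw [← hAB, hφ.hausdorffMeasure_image (Or.inl hm0)]
  -- the vectors uᵢ
  set u : Fin n → EuclideanSpace ℝ (Fin m) :=
    fun i => LinearMap.adjoint (J.toLinearMap) (EuclideanSpace.single i (1 : ℝ)) with hudef
  have hu : ∀ i x, ⟪u i, x⟫ = J x i := by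
    intro i x
    rw [hudef]
    rw [LinearMap.adjoint_inner_left, EuclideanSpace.inner_single_left]
    simp
  have ht1 : ∀ i, ‖u i‖ ^ 2 ≤ 1 := fun i => aux_t_le_one J i (u i) (hu i)
  -- measure of the projections
  have hproj : ∀ i, μH[(m : ℝ)] (coordProj i A)
      = ENNReal.ofReal (Real.sqrt (1 - ‖u i‖ ^ 2)) * μH[(m : ℝ)] B := by
    intro i
    have himg : coordProj i A = (fun y => y + (p - p i • EuclideanSpace.single i 1)) ''
        ((fun x => J x - J x i • EuclideanSpace.single i (1 : ℝ)) '' B) := by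
      rw [coordProj, ← hAB, Set.image_image, Set.image_image]
      apply Set.image_congr'
      intro x
      show φ x - (φ x) i • EuclideanSpace.single i 1 = _
      have : (φ x) i = J x i + p i := rfl
      rw [this]
      simp only [hφdef, add_smul]
      abel
    have hτ : Isometry (fun y : EuclideanSpace ℝ (Fin n) =>
        y + (p - p i • EuclideanSpace.single i 1)) :=
      Isometry.of_dist_eq fun a b => by simp [dist_add_right]
    rw [himg, hτ.hausdorffMeasure_image (Or.inl hm0), aux_key J i (u i) (hu i) B]
  -- sum of the squares of ‖uᵢ‖
  have hcoord : ∀ i j, u i j = J (EuclideanSpace.single j 1) i := by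
    intro i j
    have h := hu i (EuclideanSpace.single j 1)
    rw [EuclideanSpace.inner_single_right] at h
    simpa using h
  have hsum : ∑ i : Fin n, ‖u i‖ ^ 2 = (m : ℝ) := by
    calc ∑ i : Fin n, ‖u i‖ ^ 2
        = ∑ i : Fin n, ∑ j : Fin m, (J (EuclideanSpace.single j 1) i) ^ 2 := by
          refine Finset.sum_congr rfl fun i _ => ?_
          rw [aux_norm_sq]
          exact Finset.sum_congr rfl fun j _ => by rw [hcoord]
      _ = ∑ j : Fin m, ∑ i : Fin n, (J (EuclideanSpace.single j 1) i) ^ 2 := Finset.sum_comm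
      _ = ∑ _j : Fin m, (1 : ℝ) := by
          refine Finset.sum_congr rfl fun j _ => ?_
          rw [← aux_norm_sq, J.norm_map, EuclideanSpace.norm_single]
          norm_num
      _ = (m : ℝ) := by simp
  -- final computation
  set a := μH[(m : ℝ)] B with ha
  have hterm : ∀ i, (ENNReal.ofReal (Real.sqrt (1 - ‖u i‖ ^ 2)) * a) ^ 2
      = ENNReal.ofReal (1 - ‖u i‖ ^ 2) * a ^ 2 := by
    intro i
    rw [mul_pow, ← ENNReal.ofReal_pow (Real.sqrt_nonneg _),
      Real.sq_sqrt (by linarith [ht1 i])]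
  have hsum2 : ∑ i : Fin n, (μH[(m : ℝ)] (coordProj i A)) ^ 2
      = ((n - m : ℕ) : ℝ≥0∞) * a ^ 2 := by
    calc ∑ i : Fin n, (μH[(m : ℝ)] (coordProj i A)) ^ 2
        = ∑ i : Fin n, ENNReal.ofReal (1 - ‖u i‖ ^ 2) * a ^ 2 :=
          Finset.sum_congr rfl fun i _ => by rw [hproj i, hterm i]
      _ = (∑ i : Fin n, ENNReal.ofReal (1 - ‖u i‖ ^ 2)) * a ^ 2 := by
          rw [Finset.sum_mul]
      _ = ENNReal.ofReal (∑ i : Fin n, (1 - ‖u i‖ ^ 2)) * a ^ 2 := by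
          rw [ENNReal.ofReal_sum_of_nonneg (fun i _ => by linarith [ht1 i])]
      _ = ((n - m : ℕ) : ℝ≥0∞) * a ^ 2 := by
          rw [Finset.sum_sub_distrib, hsum]
          simp only [Finset.sum_const, Finset.card_univ, Fintype.card_fin, nsmul_eq_mul, mul_one]
          rw [← Nat.cast_sub hmn'.le, ENNReal.ofReal_natCast]
  rw [hmHA, hsum2, one_div, ← mul_assoc,
    ENNReal.inv_mul_cancel (by exact_mod_cast (by omega : n - m ≠ 0)) (ENNReal.natCast_ne_top _),
    one_mul]
end

section
/- Let f : [a,b] → ℝ be continuous with ∫_a^b f(t) dt = 0, and suppose there exists c ∈ [a,b] with f ≤ 0 on [a,c] and f ≥ 0 on [c,b]. If g : [a,b] → ℝ is nonnegative, monotone increasing, and continuous, then ∫_a^b f(t) g(t) dt ≥ 0. -/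
open MeasureTheory Set

/-- **A Chebyshev-type integral inequality.** If `f : [a,b] → ℝ` is continuous with zero
integral, nonpositive on `[a,c]` and nonnegative on `[c,b]`, and `g` is nonnegative,
monotone increasing, and continuous on `[a,b]`, then `∫_a^b f g ≥ 0`. -/
theorem stmt10 (a b c : ℝ) (hab : a ≤ b) (hc : c ∈ Icc a b) (f g : ℝ → ℝ)
    (hf : ContinuousOn f (Icc a b)) (hf0 : ∫ t in a..b, f t = 0)
    (hfneg : ∀ t ∈ Icc a c, f t ≤ 0) (hfpos : ∀ t ∈ Icc c b, 0 ≤ f t)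
    (hg : ContinuousOn g (Icc a b)) (hgnonneg : ∀ t ∈ Icc a b, 0 ≤ g t)
    (hgmono : MonotoneOn g (Icc a b)) :
    0 ≤ ∫ t in a..b, f t * g t := by
  obtain ⟨hac, hcb⟩ := hc
  have hfg : ContinuousOn (fun t => f t * (g t - g c)) (Icc a b) :=
    hf.mul (hg.sub continuousOn_const)
  have hsub1 : Icc a c ⊆ Icc a b := Icc_subset_Icc le_rfl hcb
  have hsub2 : Icc c b ⊆ Icc a b := Icc_subset_Icc hac le_rfl
  have hi1 : IntervalIntegrable (fun t => f t * (g t - g c)) volume a c :=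
    (by rw [uIcc_of_le hac]; exact hfg.mono hsub1 : ContinuousOn _ (uIcc a c)).intervalIntegrable
  have hi2 : IntervalIntegrable (fun t => f t * (g t - g c)) volume c b :=
    (by rw [uIcc_of_le hcb]; exact hfg.mono hsub2 : ContinuousOn _ (uIcc c b)).intervalIntegrable
  have hfi : IntervalIntegrable f volume a b :=
    (by rw [uIcc_of_le hab]; exact hf : ContinuousOn _ (uIcc a b)).intervalIntegrable
  have hfgi : IntervalIntegrable (fun t => f t * g t) volume a b :=
    (by rw [uIcc_of_le hab]; exact hf.mul hg : ContinuousOn _ (uIcc a b)).intervalIntegrable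
  have h1 : (0:ℝ) ≤ ∫ t in a..c, f t * (g t - g c) := by
    apply intervalIntegral.integral_nonneg hac
    intro u hu
    have h1 := hfneg u hu
    have h2 := sub_nonpos.2 (hgmono (hsub1 hu) ⟨hac, hcb⟩ hu.2)
    nlinarith
  have h2 : (0:ℝ) ≤ ∫ t in c..b, f t * (g t - g c) := by
    apply intervalIntegral.integral_nonneg hcb
    intro u hu
    exact mul_nonneg (hfpos u hu) (sub_nonneg.2 (hgmono ⟨hac, hcb⟩ (hsub2 hu) hu.1))
  have key : (0:ℝ) ≤ ∫ t in a..b, f t * (g t - g c) := by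
    rw [← intervalIntegral.integral_add_adjacent_intervals hi1 hi2]
    exact add_nonneg h1 h2
  have heq : (fun t => f t * (g t - g c)) = fun t => f t * g t - g c * f t := by
    funext t; ring
  rw [heq, intervalIntegral.integral_sub hfgi (hfi.const_mul _),
    intervalIntegral.integral_const_mul, hf0, mul_zero, sub_zero] at key
  exact key
end

section
/- Let a₁,...,aₙ be nonnegative real numbers. There exists a vector x = (x₁,...,xₙ) ∈ ℝⁿ such that, for each i, ∑_{k≠i} x_k² = aᵢ², if and only if aᵢ² ≤ (1/(n-1)) ∑_{k=1}^n a_k² for all i = 1,...,n. -/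
open Finset

/-- Let `a₁,…,aₙ ≥ 0`. There exists `x ∈ ℝⁿ` with `∑_{k ≠ i} x_k² = aᵢ²` for each `i`
if and only if `aᵢ² ≤ (1/(n-1)) ∑ₖ a_k²` for all `i`. -/
theorem stmt15 (n : ℕ) (a : Fin n → ℝ) (ha : ∀ i, 0 ≤ a i) :
    (∃ x : Fin n → ℝ, ∀ i, ∑ k ∈ Finset.univ.erase i, x k ^ 2 = a i ^ 2) ↔
      ∀ i, a i ^ 2 ≤ (1 / ((n : ℝ) - 1)) * ∑ k, a k ^ 2 := by
  rcases Nat.lt_or_ge n 2 with hn | hn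
  · -- n = 0 or n = 1
    interval_cases n
    · exact ⟨fun _ i => i.elim0, fun _ => ⟨0, fun i => i.elim0⟩⟩
    · constructor
      · intro ⟨x, hx⟩ i
        have h := hx i
        have huniv : (Finset.univ : Finset (Fin 1)).erase i = ∅ := by
          ext j; simp [Fin.ext_iff, (Fin.ext_iff.mp (Subsingleton.elim j i))]
        rw [huniv] at h
        simp at h
        simp [← h]
      · intro h
        refine ⟨0, fun i => ?_⟩
        have h1 := h i
        norm_num at h1
        have h2 := sq_nonneg (a i)
        have : a i ^ 2 = 0 := by rw [h1]; norm_num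
        simp [this]
  · have hn1 : (0:ℝ) < (n : ℝ) - 1 := by
      have : (2:ℝ) ≤ (n:ℝ) := by exact_mod_cast hn
      linarith
    have hne : ((n:ℝ) - 1) ≠ 0 := ne_of_gt hn1
    constructor
    · intro ⟨x, hx⟩ i
      set S := ∑ k, x k ^ 2 with hS
      have key : ∀ j, S - x j ^ 2 = a j ^ 2 := by
        intro j
        rw [← hx j, Finset.sum_erase_eq_sub (Finset.mem_univ j)]
      have hsum : ((n:ℝ) - 1) * S = ∑ k, a k ^ 2 := by
        have : ∑ j, (S - x j ^ 2) = ∑ j, a j ^ 2 := Finset.sum_congr rfl fun j _ => key j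
        rw [Finset.sum_sub_distrib, Finset.sum_const, Finset.card_univ,
          Fintype.card_fin, nsmul_eq_mul] at this
        rw [sub_mul, one_mul]
        linarith
      have hai : a i ^ 2 ≤ S := by
        have := key i
        nlinarith [sq_nonneg (x i)]
      rw [div_mul_eq_mul_div, one_mul, le_div_iff₀ hn1, ← hsum]
      nlinarith
    · intro h
      set S := (1 / ((n : ℝ) - 1)) * ∑ k, a k ^ 2 with hS
      have hSa : ∀ i, 0 ≤ S - a i ^ 2 := fun i => sub_nonneg.mpr (h i)
      refine ⟨fun i => Real.sqrt (S - a i ^ 2), fun i => ?_⟩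
      have hsq : ∀ j, Real.sqrt (S - a j ^ 2) ^ 2 = S - a j ^ 2 := fun j =>
        Real.sq_sqrt (hSa j)
      have hsum : ((n:ℝ) - 1) * S = ∑ k, a k ^ 2 := by
        rw [hS]; field_simp
      have htot : ∑ k, Real.sqrt (S - a k ^ 2) ^ 2 = S := by
        rw [Finset.sum_congr rfl fun j _ => hsq j, Finset.sum_sub_distrib,
          Finset.sum_const, Finset.card_univ, Fintype.card_fin, nsmul_eq_mul]
        linarith
      rw [Finset.sum_erase_eq_sub (Finset.mem_univ i), htot, hsq i]
      ring
end

section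
/- The mean-width functional satisfies V₁(C³)²/(3 · (2√2)²) < 1/2; that is, the regular coordinate cross-polytope C³ in ℝ³ violates the inequality V₁(K)² ≥ (1/2) ∑_{i=1}^3 V₁(K|eᵢ^⊥)². Concretely: (6√2 arccos(1/3)/π)² < 12. -/
lemma arccos_third_lt : Real.arccos (1 / 3) < Real.pi / Real.sqrt 6 := by
  have hpi := Real.pi_gt_three
  have hpi' := Real.pi_lt_d2
  have hs6 : Real.sqrt 6 < 2.45 := by
    rw [show (2.45 : ℝ) = Real.sqrt (2.45 ^ 2) by rw [Real.sqrt_sq]; norm_num]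
    exact Real.sqrt_lt_sqrt (by norm_num) (by norm_num)
  have hs6lo : (2 : ℝ) < Real.sqrt 6 := by
    rw [show (2 : ℝ) = Real.sqrt (2 ^ 2) by rw [Real.sqrt_sq]; norm_num]
    exact Real.sqrt_lt_sqrt (by norm_num) (by norm_num)
  have hs6pos : (0 : ℝ) < Real.sqrt 6 := by linarith
  obtain ⟨y, hy⟩ : ∃ y : ℝ, y = Real.pi / 2 - Real.pi / Real.sqrt 6 := ⟨_, rfl⟩
  have hy0 : 0 < y := by
    rw [hy, sub_pos, div_lt_div_iff₀ hs6pos two_pos]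
    nlinarith [Real.pi_pos]
  have hylt : y < 1 / 3 := by
    have h16 : Real.pi / 2.45 < Real.pi / Real.sqrt 6 :=
      div_lt_div_of_pos_left Real.pi_pos hs6pos hs6
    have h17 : Real.pi / 2 - Real.pi / 2.45 < 1 / 3 := by
      rw [div_sub_div _ _ (by norm_num : (2:ℝ) ≠ 0) (by norm_num : (2.45:ℝ) ≠ 0),
        div_lt_iff₀ (by norm_num : (0:ℝ) < 2 * 2.45)]
      nlinarith
    rw [hy]; linarith
  have hyIco : y ∈ Set.Ico (-(Real.pi / 2)) (Real.pi / 2) := by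
    constructor
    · linarith [Real.pi_pos]
    · rw [hy]
      have : 0 < Real.pi / Real.sqrt 6 := div_pos Real.pi_pos hs6pos
      linarith
  have harcsin : y < Real.arcsin (1 / 3) := by
    rw [Real.lt_arcsin_iff_sin_lt' hyIco]
    have := Real.sin_lt hy0
    linarith
  rw [Real.arccos_eq_pi_div_two_sub_arcsin (1 / 3)]
  rw [hy] at harcsin
  linarith

/-- The regular coordinate cross-polytope `C³` violates
`V₁(K)² ≥ (1/2) ∑_{i=1}^3 V₁(K|eᵢ^⊥)²`: since `V₁(C³) = (6√2/π) arccos(1/3)` and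
`V₁(C³|eᵢ^⊥) = 2√2`, this amounts to `(6√2 arccos(1/3)/π)² < 12`. -/
theorem stmt19 :
    (6 * Real.sqrt 2 * Real.arccos (1 / 3) / Real.pi) ^ 2 < 12 := by
  have hpi := Real.pi_pos
  have ha0 : 0 ≤ Real.arccos (1 / 3) := Real.arccos_nonneg _
  have h := arccos_third_lt
  have hs6pos : (0 : ℝ) < Real.sqrt 6 := Real.sqrt_pos.2 (by norm_num)
  have hsq2 : Real.sqrt 2 ^ 2 = 2 := Real.sq_sqrt (by norm_num)
  have hsq6 : Real.sqrt 6 ^ 2 = 6 := Real.sq_sqrt (by norm_num)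
  have ha2 : Real.arccos (1 / 3) ^ 2 < Real.pi ^ 2 / 6 := by
    calc Real.arccos (1 / 3) ^ 2 < (Real.pi / Real.sqrt 6) ^ 2 :=
          pow_lt_pow_left₀ h ha0 (by norm_num)
      _ = Real.pi ^ 2 / 6 := by rw [div_pow, hsq6]
  rw [div_pow, mul_pow, mul_pow, hsq2, div_lt_iff₀ (by positivity)]
  nlinarith
end
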